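/- arXiv:2404.18855 — 2 statements merged into one kernel-verified Lean document; each statement's English description precedes it below -/
import Mathlib

section
/- Let E be a subset of [0,1]. The following are equivalent: (i) the Hausdorff dimension of I_σ ∩ E equals the Hausdorff dimension of E for every strictly increasing finite sequence σ of positive integers (of any positive length); (ii) the Hausdorff dimension of U ∩ E equals the Hausdorff dimension of E for every non-empty open subset U of [0,1] (with its subspace topology from ℝ). -/
open Filter Set Topology MeasureTheory
open scoped ENNReal NNReal

/-- The Pierce expansion map `T`. -/
noncomputable def pierceT (x : ℝ) : ℝ := if x = 0 then 0 else 1 - (⌊1 / x⌋₊ : ℝ) * x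

/-- The first Pierce digit `d₁(x)`, with `d₁(0) = ∞`. -/
noncomputable def pierceD1 (x : ℝ) : ℕ∞ := if x = 0 then ⊤ else ((⌊1 / x⌋₊ : ℕ) : ℕ∞)

/-- The `k`-th Pierce expansion digit `d_k(x)` (for `k ≥ 1`). -/
noncomputable def pierceDigit (k : ℕ) (x : ℝ) : ℕ∞ := pierceD1 (pierceT^[k - 1] x)

/-- Extended logarithm on `ℕ∞`, with the convention `log ∞ = ∞`. -/
noncomputable def enlog (m : ℕ∞) : ℝ≥0∞ :=
  if m = ⊤ then ⊤ else ENNReal.ofReal (Real.log ((WithTop.untopD 0 m : ℕ) : ℝ))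

/-- `A(α) = {x ∈ [0,1] : lim (log d_n(x))/n = α}`. -/
noncomputable def pierceA (α : ℝ≥0∞) : Set ℝ :=
  {x ∈ Icc (0 : ℝ) 1 |
    Tendsto (fun n : ℕ => enlog (pierceDigit n x) / (n : ℝ≥0∞)) atTop (𝓝 α)}

/-- The number of leap years up to year `N` with intercalation sequence `σ`:
`L(σ, N) = Σ_{k ≥ 1} (-1)^{k+1} ⌊N/(σ₁⋯σ_k)⌋`, with `⌊N/∞⌋ = 0`. -/
noncomputable def leapL (σ : ℕ → ℕ∞) (N : ℕ) : ℝ :=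
  ∑' k : ℕ, (-1 : ℝ) ^ k *
    ((N / WithTop.untopD 0 (∏ i ∈ Finset.Icc 1 (k + 1), σ i) : ℕ) : ℝ)

/-- The quotient `(Nx - L((d_k(x))_k, N))/√(log N)`. -/
noncomputable def leapQ (x : ℝ) (N : ℕ) : ℝ :=
  ((N : ℝ) * x - leapL (fun k => pierceDigit k x) N) / Real.sqrt (Real.log N)

/-- `S(α)`: the set of `x ∈ [0,1]` whose leap-year quotient has limsup `1/√(2α)`
and liminf `-1/√(2α)`. -/
noncomputable def pierceS (α : ℝ≥0∞) : Set ℝ :=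
  {x ∈ Icc (0 : ℝ) 1 |
    Filter.limsup (fun N : ℕ => ((leapQ x N : ℝ) : EReal)) atTop
      = (((2 * α) ^ (-(1 / 2) : ℝ) : ℝ≥0∞) : EReal) ∧
    Filter.liminf (fun N : ℕ => ((leapQ x N : ℝ) : EReal)) atTop
      = -(((2 * α) ^ (-(1 / 2) : ℝ) : ℝ≥0∞) : EReal)}

/-- The fundamental interval `I_σ` associated with the finite sequence `σ 1, …, σ n`. -/
def fundI (n : ℕ) (σ : ℕ → ℕ) : Set ℝ :=
  {x ∈ Icc (0 : ℝ) 1 | ∀ k, 1 ≤ k → k ≤ n → pierceDigit k x = ((σ k : ℕ) : ℕ∞)}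

lemma pierceDigit_one (x : ℝ) : pierceDigit 1 x = pierceD1 x := by
  simp [pierceDigit]

lemma pierceDigit_succ_succ (k : ℕ) (x : ℝ) :
    pierceDigit (k + 2) x = pierceDigit (k + 1) (pierceT x) := by
  show pierceD1 (pierceT^[k + 2 - 1] x) = pierceD1 (pierceT^[k + 1 - 1] (pierceT x))
  rw [show k + 2 - 1 = (k + 1 - 1) + 1 by omega, Function.iterate_succ_apply]

lemma pierceD1_eq_coe {x : ℝ} (hx : x ≠ 0) : pierceD1 x = ((⌊1/x⌋₊ : ℕ) : ℕ∞) := if_neg hx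

lemma pierceT_eq {x : ℝ} (hx : x ≠ 0) : pierceT x = 1 - (⌊1/x⌋₊ : ℝ) * x := if_neg hx

lemma pierceD1_eq_coe_iff {x : ℝ} {m : ℕ} (h : pierceD1 x = (m : ℕ∞)) :
    x ≠ 0 ∧ ⌊1/x⌋₊ = m := by
  unfold pierceD1 at h
  split_ifs at h with hx
  · exact absurd h.symm (by simp)
  · exact ⟨hx, by exact_mod_cast h⟩

lemma floor_inv_eq {d : ℕ} (hd : 1 ≤ d) {x : ℝ} (h1 : 1 / ((d : ℝ) + 1) < x)
    (h2 : x < 1 / (d : ℝ)) : ⌊1 / x⌋₊ = d := by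
  have hd0 : (0:ℝ) < d := by exact_mod_cast hd
  have hx0 : 0 < x := lt_trans (by positivity) h1
  rw [Nat.floor_eq_iff (by positivity)]
  constructor
  · rw [le_div_iff₀ hx0]
    have := (lt_div_iff₀ hd0).mp h2
    nlinarith
  · rw [div_lt_iff₀ hx0]
    have := (div_lt_iff₀ (by positivity : (0:ℝ) < (d:ℝ) + 1)).mp h1
    nlinarith

/-- shifting: if `x ∈ I_σ` of depth `n+1`, then `T x ∈ I_{σ∘shift}` of depth `n`. -/
lemma fundI_shift {n : ℕ} {σ : ℕ → ℕ} {x : ℝ} (hx : x ∈ fundI (n+1) σ) :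
    0 < x ∧ ⌊1/x⌋₊ = σ 1 ∧ pierceT x ∈ fundI n (fun k => σ (k+1)) := by
  obtain ⟨hxI, hdig⟩ := hx
  have h1 := hdig 1 le_rfl (by omega)
  rw [pierceDigit_one] at h1
  obtain ⟨hx0, hfl⟩ := pierceD1_eq_coe_iff h1
  have hx0' : 0 < x := lt_of_le_of_ne hxI.1 (Ne.symm hx0)
  have hfle : (⌊1/x⌋₊ : ℝ) ≤ 1 / x := Nat.floor_le (by positivity)
  have hmul : (⌊1/x⌋₊ : ℝ) * x ≤ 1 := by
    have := mul_le_mul_of_nonneg_right hfle hx0'.le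
    rwa [one_div_mul_cancel hx0'.ne'] at this
  have hT : pierceT x = 1 - (⌊1/x⌋₊:ℝ) * x := if_neg hx0
  refine ⟨hx0', hfl, ⟨⟨by rw [hT]; linarith, by rw [hT]; nlinarith [Nat.cast_nonneg (α := ℝ) ⌊1/x⌋₊, hx0'.le, mul_nonneg (Nat.cast_nonneg (α := ℝ) ⌊1/x⌋₊) hx0'.le]⟩, ?_⟩⟩
  intro k hk1 hkn
  obtain ⟨m, rfl⟩ : ∃ m, k = m + 1 := ⟨k - 1, by omega⟩
  rw [← pierceDigit_succ_succ]
  exact hdig (m+2) (by omega) (by omega)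

/-- contraction/diameter bound for fundamental intervals. -/
lemma fundI_diam : ∀ (n : ℕ) (σ : ℕ → ℕ) (x y : ℝ), x ∈ fundI n σ → y ∈ fundI n σ →
    |x - y| * ∏ k ∈ Finset.Icc 1 n, (σ k : ℝ) ≤ 1 := by
  intro n
  induction n with
  | zero =>
    intro σ x y hx hy
    have h : Finset.Icc 1 0 = (∅ : Finset ℕ) := by decide
    rw [h, Finset.prod_empty, mul_one]
    obtain ⟨⟨hx0, hx1⟩, -⟩ := hx
    obtain ⟨⟨hy0, hy1⟩, -⟩ := hy
    rw [abs_sub_le_iff]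
    constructor <;> linarith
  | succ n ih =>
    intro σ x y hx hy
    obtain ⟨hx0, hxf, hTx⟩ := fundI_shift hx
    obtain ⟨hy0, hyf, hTy⟩ := fundI_shift hy
    have key := ih (fun k => σ (k+1)) _ _ hTx hTy
    have habs : |pierceT x - pierceT y| = (σ 1 : ℝ) * |x - y| := by
      rw [pierceT_eq hx0.ne', pierceT_eq hy0.ne', hxf, hyf]
      rw [show (1 - (σ 1:ℝ) * x) - (1 - (σ 1:ℝ) * y) = (σ 1 : ℝ) * (y - x) by ring,
        abs_mul, Nat.abs_cast, abs_sub_comm]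
    have hprod : ∏ k ∈ Finset.Icc 1 (n+1), (σ k : ℝ)
        = (σ 1 : ℝ) * ∏ k ∈ Finset.Icc 1 n, ((σ (k+1) : ℕ) : ℝ) := by
      rw [← Finset.mul_prod_Ioc_eq_prod_Icc (by omega : 1 ≤ n + 1)]
      congr 1
      have himg : Finset.Ioc 1 (n+1) = Finset.image (· + 1) (Finset.Icc 1 n) := by
        ext j
        simp only [Finset.mem_Ioc, Finset.mem_image, Finset.mem_Icc]
        constructor
        · intro ⟨h1, h2⟩; exact ⟨j - 1, ⟨by omega, by omega⟩, by omega⟩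
        · rintro ⟨i, ⟨h1, h2⟩, rfl⟩; omega
      rw [himg, Finset.prod_image (by intro a _ b _ h; exact Nat.add_right_cancel h)]
    rw [hprod]
    calc |x - y| * ((σ 1 : ℝ) * ∏ k ∈ Finset.Icc 1 n, ((σ (k+1) : ℕ) : ℝ))
        = ((σ 1 : ℝ) * |x - y|) * ∏ k ∈ Finset.Icc 1 n, ((σ (k+1) : ℕ) : ℝ) := by ring
      _ = |pierceT x - pierceT y| * ∏ k ∈ Finset.Icc 1 n, ((σ (k+1) : ℕ) : ℝ) := by
          rw [habs]
      _ ≤ 1 := key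

/-- every valid fundamental interval contains a nonempty open interval. -/
lemma fundI_Ioo : ∀ (n : ℕ) (σ : ℕ → ℕ),
    (∀ k, 1 ≤ k → k ≤ n+1 → 0 < σ k) → (∀ k, 1 ≤ k → k+1 ≤ n+1 → σ k < σ (k+1)) →
    ∃ a b : ℝ, a < b ∧ 1/((σ 1 : ℝ)+1) ≤ a ∧ b ≤ 1/(σ 1 : ℝ) ∧ Ioo a b ⊆ fundI (n+1) σ := by
  intro n
  induction n with
  | zero =>
    intro σ hpos _
    have h1 : 1 ≤ σ 1 := hpos 1 le_rfl le_rfl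
    have h1' : (0:ℝ) < σ 1 := by exact_mod_cast h1
    refine ⟨1/((σ 1:ℝ)+1), 1/(σ 1:ℝ), ?_, le_rfl, le_rfl, ?_⟩
    · apply one_div_lt_one_div_of_lt h1' (by linarith)
    · rintro x ⟨hx1, hx2⟩
      have hx0 : 0 < x := lt_trans (by positivity) hx1
      have hfl : ⌊1/x⌋₊ = σ 1 := floor_inv_eq h1 hx1 hx2
      have hle1 : 1/(σ 1:ℝ) ≤ 1 := by
        rw [div_le_one h1']; exact_mod_cast h1
      refine ⟨⟨hx0.le, by linarith⟩, ?_⟩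
      intro k hk1 hk2
      have hk : k = 1 := by omega
      subst hk
      rw [pierceDigit_one, pierceD1_eq_coe hx0.ne', hfl]
  | succ n ih =>
    intro σ hpos hinc
    obtain ⟨a, b, hab, ha, hb, hsub⟩ := ih (fun k => σ (k+1))
        (fun k hk1 hk2 => hpos (k+1) (by omega) (by omega))
        (fun k hk1 hk2 => hinc (k+1) (by omega) (by omega))
    have hd1 : 1 ≤ σ 1 := hpos 1 le_rfl (by omega)
    have hd : (0:ℝ) < σ 1 := by exact_mod_cast hd1
    have h12 : σ 1 + 1 ≤ σ 2 := hinc 1 le_rfl (by omega)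
    have h12' : (σ 1:ℝ) + 1 ≤ σ 2 := by exact_mod_cast h12
    have hσ2 : (0:ℝ) < σ 2 := by linarith
    have hb' : b ≤ 1/((σ 1:ℝ)+1) := le_trans hb (by
      apply one_div_le_one_div_of_le (by linarith) h12')
    have ha0 : 0 < a := lt_of_lt_of_le (by positivity) ha
    have hlb : 1/((σ 1:ℝ)+1) ≤ (1-b)/(σ 1:ℝ) := by
      rw [div_le_div_iff₀ (by positivity) hd]
      have hbb : b * ((σ 1:ℝ)+1) ≤ 1 := by
        rw [← le_div_iff₀ (by positivity : (0:ℝ) < (σ 1:ℝ)+1)]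
        exact hb'
      nlinarith
    have hub : (1-a)/(σ 1:ℝ) ≤ 1/(σ 1:ℝ) := by
      gcongr
      linarith
    refine ⟨(1-b)/(σ 1:ℝ), (1-a)/(σ 1:ℝ), ?_, hlb, hub, ?_⟩
    · rw [div_lt_div_iff₀ hd hd]
      nlinarith
    · rintro x ⟨hxl, hxr⟩
      have hx1 : 1/((σ 1:ℝ)+1) < x := lt_of_le_of_lt hlb hxl
      have hx2 : x < 1/(σ 1:ℝ) := lt_of_lt_of_le hxr hub
      have hx0 : 0 < x := lt_trans (by positivity) hx1
      have hfl : ⌊1/x⌋₊ = σ 1 := floor_inv_eq hd1 hx1 hx2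
      have hTx : pierceT x = 1 - (σ 1:ℝ) * x := by rw [pierceT_eq hx0.ne', hfl]
      have hTmem : pierceT x ∈ Ioo a b := by
        constructor
        · rw [hTx]
          have := (lt_div_iff₀ hd).mp hxr
          linarith
        · rw [hTx]
          have := (div_lt_iff₀ hd).mp hxl
          linarith
      have hTfund := hsub hTmem
      have hle1 : 1/(σ 1:ℝ) ≤ 1 := by
        rw [div_le_one hd]; exact_mod_cast hd1
      refine ⟨⟨hx0.le, by linarith⟩, ?_⟩
      intro k hk1 hk2
      match k, hk1 with
      | 1, _ => rw [pierceDigit_one, pierceD1_eq_coe hx0.ne', hfl]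
      | (m+2), _ =>
        rw [pierceDigit_succ_succ]
        exact hTfund.2 (m+1) (by omega) (by omega)

/-- One step of the Pierce map on an irrational point of `(0,1)`. -/
lemma pierce_step {y : ℝ} (hy : Irrational y) (h0 : 0 < y) (h1 : y < 1) :
    Irrational (pierceT y) ∧ 0 < pierceT y ∧ pierceT y < 1 ∧ ⌊1/y⌋₊ < ⌊1/pierceT y⌋₊ := by
  have hf1 : 1 ≤ ⌊1/y⌋₊ := Nat.le_floor (by
    rw [Nat.cast_one, le_div_iff₀ h0, one_mul]; exact h1.le)
  have hfr : (0:ℝ) < ⌊1/y⌋₊ := by exact_mod_cast hf1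
  have hT : pierceT y = 1 - (⌊1/y⌋₊:ℝ) * y := if_neg h0.ne'
  have hirr : Irrational (pierceT y) := by
    rw [hT]
    have := (hy.natCast_mul (show ⌊1/y⌋₊ ≠ 0 by omega)).natCast_sub 1
    simpa using this
  have hle : (⌊1/y⌋₊:ℝ) ≤ 1/y := Nat.floor_le (by positivity)
  have hmul : (⌊1/y⌋₊:ℝ) * y ≤ 1 := by
    have := mul_le_mul_of_nonneg_right hle h0.le
    rwa [one_div_mul_cancel h0.ne'] at this
  have hTpos : 0 < pierceT y :=
    lt_of_le_of_ne (by rw [hT]; linarith) (Ne.symm hirr.ne_zero)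
  have hTlt1 : pierceT y < 1 := by rw [hT]; nlinarith
  have hy2 : 1/y < (⌊1/y⌋₊:ℝ) + 1 := Nat.lt_floor_add_one _
  rw [div_lt_iff₀ h0] at hy2
  have hkey : ((⌊1/y⌋₊:ℝ)+1) * pierceT y ≤ 1 := by
    rw [hT]
    nlinarith [mul_lt_mul_of_pos_left hy2 hfr]
  have hstep : (⌊1/y⌋₊:ℝ) + 1 ≤ 1 / pierceT y := by
    rw [le_div_iff₀ hTpos]; exact hkey
  have hdig : ⌊1/y⌋₊ + 1 ≤ ⌊1/pierceT y⌋₊ := Nat.le_floor (by push_cast; exact hstep)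
  exact ⟨hirr, hTpos, hTlt1, by omega⟩

lemma pierce_chain {x : ℝ} (hx : Irrational x) (h0 : 0 < x) (h1 : x < 1) (k : ℕ) :
    Irrational (pierceT^[k] x) ∧ 0 < pierceT^[k] x ∧ pierceT^[k] x < 1 := by
  induction k with
  | zero => exact ⟨hx, h0, h1⟩
  | succ k ih =>
    rw [Function.iterate_succ_apply']
    obtain ⟨a, b, c⟩ := ih
    obtain ⟨d, e, f, -⟩ := pierce_step a b c
    exact ⟨d, e, f⟩


theorem stmt11 (E : Set ℝ) (hE : E ⊆ Set.Icc 0 1) :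
    (∀ (n : ℕ) (σ : ℕ → ℕ), 1 ≤ n →
        (∀ k, 1 ≤ k → k ≤ n → 0 < σ k) →
        (∀ k, 1 ≤ k → k + 1 ≤ n → σ k < σ (k + 1)) →
        dimH (fundI n σ ∩ E) = dimH E) ↔
      (∀ U : Set ℝ, U.Nonempty → (∃ V : Set ℝ, IsOpen V ∧ U = V ∩ Set.Icc 0 1) →
        dimH (U ∩ E) = dimH E) := by
  constructor
  · rintro h U hUne ⟨V, hV, hUV⟩
    obtain ⟨x₀, hx₀⟩ := hUne
    rw [hUV] at hx₀
    obtain ⟨hx₀V, hx₀I⟩ := hx₀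
    obtain ⟨ε, hε, hball⟩ := Metric.isOpen_iff.mp hV x₀ hx₀V
    set c := max (x₀ - ε/3) 0 with hcdef
    set d := min (x₀ + ε/3) 1 with hddef
    have hc0 : 0 ≤ c := le_max_right _ _
    have hd1 : d ≤ 1 := min_le_right _ _
    have hcx : c ≤ x₀ := max_le (by linarith) hx₀I.1
    have hxd : x₀ ≤ d := le_min (by linarith) hx₀I.2
    have hcd : c < d := by
      rcases lt_or_eq_of_le hx₀I.2 with h1 | h1
      · exact lt_of_le_of_lt hcx (lt_min (by linarith) h1)
      · have hd' : d = 1 := min_eq_right (by rw [← h1]; linarith)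
        rw [hcdef, hd']
        apply max_lt
        · linarith
        · linarith
    have hIccU : Icc c d ⊆ U := by
      intro y hy
      rw [hUV]
      have h1 : x₀ - ε/3 ≤ c := le_max_left _ _
      have h2 : d ≤ x₀ + ε/3 := min_le_left _ _
      refine ⟨hball ?_, le_trans hc0 hy.1, le_trans hy.2 hd1⟩
      rw [Metric.mem_ball, Real.dist_eq, abs_sub_lt_iff]
      constructor
      · linarith [hy.2]
      · linarith [hy.1]
    obtain ⟨x, hirr, hcx', hxd'⟩ := exists_irrational_btwn hcd
    have hx0 : 0 < x := lt_of_le_of_lt hc0 hcx'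
    have hx1 : x < 1 := lt_of_lt_of_le hxd' hd1
    set σ : ℕ → ℕ := fun k => ⌊1 / (pierceT^[k-1] x)⌋₊ with hσ
    have hchain := fun k => pierce_chain hirr hx0 hx1 k
    have hσpos : ∀ k, 1 ≤ k → 1 ≤ σ k := by
      intro k hk
      apply Nat.le_floor
      have hh := hchain (k-1)
      rw [Nat.cast_one, le_div_iff₀ hh.2.1, one_mul]
      exact hh.2.2.le
    have hσinc : ∀ k, 1 ≤ k → σ k < σ (k+1) := by
      intro k hk
      have hh := hchain (k-1)
      have hstep := (pierce_step hh.1 hh.2.1 hh.2.2).2.2.2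
      have hit : pierceT^[(k+1)-1] x = pierceT (pierceT^[k-1] x) := by
        rw [show (k+1)-1 = (k-1)+1 by omega, Function.iterate_succ_apply']
      simp only [hσ]
      rw [hit]
      exact hstep
    have hσn : ∀ k, 1 ≤ k → k ≤ σ k := by
      intro k hk
      induction k with
      | zero => omega
      | succ k ih =>
        rcases Nat.lt_or_ge 1 (k+1) with h1 | h1
        · have h2 : 1 ≤ k := by omega
          have := hσinc k h2
          have := ih h2
          omega
        · have : k = 0 := by omega
          subst this
          exact hσpos 1 le_rfl
    have hxfund : ∀ n, x ∈ fundI n σ := by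
      intro n
      refine ⟨⟨hx0.le, hx1.le⟩, ?_⟩
      intro k hk1 hk2
      show pierceD1 (pierceT^[k-1] x) = _
      rw [pierceD1_eq_coe (hchain (k-1)).2.1.ne']
    set m := min (x - c) (d - x) with hm
    have hm0 : 0 < m := lt_min (by linarith) (by linarith)
    obtain ⟨n, hn⟩ := exists_nat_gt (1/m)
    have hn0 : (0:ℝ) < n := lt_trans (by positivity) hn
    have hn1 : 1 ≤ n := by exact_mod_cast Nat.one_le_iff_ne_zero.mpr (by
      intro hcon; rw [hcon] at hn0; simp at hn0)
    have hfsub : fundI n σ ⊆ Icc c d := by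
      intro y hy
      have hdiam := fundI_diam n σ x y (hxfund n) hy
      have hP : (n:ℝ) ≤ ∏ k ∈ Finset.Icc 1 n, (σ k : ℝ) := by
        calc (n:ℝ) ≤ (σ n : ℝ) := by exact_mod_cast hσn n hn1
          _ ≤ ∏ k ∈ Finset.Icc 1 n, (σ k : ℝ) := by
              have hnat : σ n ≤ ∏ k ∈ Finset.Icc 1 n, σ k :=
                Finset.single_le_prod' (fun i hi => hσpos i (Finset.mem_Icc.mp hi).1)
                  (Finset.mem_Icc.mpr ⟨hn1, le_rfl⟩)
              calc ((σ n : ℕ) : ℝ) ≤ ((∏ k ∈ Finset.Icc 1 n, σ k : ℕ) : ℝ) := by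
                    exact_mod_cast hnat
                _ = ∏ k ∈ Finset.Icc 1 n, (σ k : ℝ) := by push_cast; rfl
      have hxy : |x - y| ≤ 1/(n:ℝ) := by
        rw [le_div_iff₀ hn0, ← sub_nonneg]
        have h3 : |x - y| * (n:ℝ) ≤ |x - y| * ∏ k ∈ Finset.Icc 1 n, (σ k : ℝ) :=
          mul_le_mul_of_nonneg_left hP (abs_nonneg _)
        linarith
      have h1n : 1/(n:ℝ) < m := by
        rw [div_lt_iff₀ hn0]
        have := (div_lt_iff₀ hm0).mp hn
        linarith [mul_comm (n:ℝ) m]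
      have habs : |x - y| < m := lt_of_le_of_lt hxy h1n
      rw [abs_sub_lt_iff] at habs
      have hmc : m ≤ x - c := min_le_left _ _
      have hmd : m ≤ d - x := min_le_right _ _
      exact ⟨by linarith [habs.2], by linarith [habs.1]⟩
    have hdim := h n σ hn1 (fun k hk _ => hσpos k hk) (fun k hk _ => hσinc k hk)
    apply le_antisymm
    · exact dimH_mono inter_subset_right
    · calc dimH E = dimH (fundI n σ ∩ E) := hdim.symm
        _ ≤ dimH (U ∩ E) :=
            dimH_mono (inter_subset_inter_left E (subset_trans hfsub hIccU))
  · intro h n σ hn hpos hinc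
    obtain ⟨m, rfl⟩ : ∃ m, n = m + 1 := ⟨n - 1, by omega⟩
    obtain ⟨a, b, hab, ha, hb, hsub⟩ := fundI_Ioo m σ hpos hinc
    have hσ1 : 1 ≤ σ 1 := hpos 1 le_rfl (by omega)
    have hσ1' : (1:ℝ) ≤ σ 1 := by exact_mod_cast hσ1
    have ha0 : 0 < a := lt_of_lt_of_le (by positivity) ha
    have hb1 : b ≤ 1 := le_trans hb (by rw [div_le_one (by linarith)]; exact hσ1')
    have hIooIcc : Ioo a b ⊆ Icc (0:ℝ) 1 :=
      fun y hy => ⟨le_of_lt (lt_trans ha0 hy.1), le_trans hy.2.le hb1⟩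
    have hU := h (Ioo a b) (nonempty_Ioo.mpr hab)
      ⟨Ioo a b, isOpen_Ioo, (Set.inter_eq_self_of_subset_left hIooIcc).symm⟩
    apply le_antisymm
    · exact dimH_mono inter_subset_right
    · calc dimH E = dimH (Ioo a b ∩ E) := hU.symm
        _ ≤ dimH (fundI (m+1) σ ∩ E) := dimH_mono (inter_subset_inter_left E hsub)
end

section
/- Let x ∈ [0,1] and α ∈ [0,∞]. If lim_{n→∞} (log d_n(x))/n = α, then lim_{n→∞} (log(d₁(x)·d₂(x)⋯d_n(x)))/(n²/2) = α (as a limit in [0,∞]). -/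
open Filter Set Topology MeasureTheory
open scoped ENNReal NNReal

lemma pierceT_mem {x : ℝ} (hx : x ∈ Icc (0:ℝ) 1) : pierceT x ∈ Icc (0:ℝ) 1 := by
  rcases eq_or_ne x 0 with h | h
  · simp [pierceT, h]
  · have hx0 : 0 < x := lt_of_le_of_ne hx.1 (Ne.symm h)
    have hfl : (⌊1/x⌋₊ : ℝ) ≤ 1/x := Nat.floor_le (by positivity)
    have hfl2 : 1/x - 1 < (⌊1/x⌋₊ : ℝ) := Nat.sub_one_lt_floor (1/x)
    have hinv : (1/x) * x = 1 := by field_simp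
    unfold pierceT
    rw [if_neg h]
    constructor
    · nlinarith [mul_le_mul_of_nonneg_right hfl hx0.le]
    · nlinarith [mul_lt_mul_of_pos_right hfl2 hx0, hx.2]

lemma pierceT_iter_mem {x : ℝ} (hx : x ∈ Icc (0:ℝ) 1) (k : ℕ) :
    pierceT^[k] x ∈ Icc (0:ℝ) 1 := by
  induction k with
  | zero => simpa
  | succ n ih => rw [Function.iterate_succ_apply']; exact pierceT_mem ih

lemma pierceD1_ne_zero {y : ℝ} (hy : y ∈ Icc (0:ℝ) 1) : pierceD1 y ≠ 0 := by
  rcases eq_or_ne y 0 with h | h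
  · simp [pierceD1, h]
  · have hy0 : 0 < y := lt_of_le_of_ne hy.1 (Ne.symm h)
    have : 1 ≤ ⌊1/y⌋₊ := by
      apply Nat.le_floor
      rw [Nat.cast_one, le_one_div one_pos hy0]
      simpa using hy.2
    simp only [pierceD1, if_neg h]
    exact_mod_cast Nat.one_le_iff_ne_zero.mp this

lemma pierceDigit_ne_zero {x : ℝ} (hx : x ∈ Icc (0:ℝ) 1) (k : ℕ) :
    pierceDigit k x ≠ 0 :=
  pierceD1_ne_zero (pierceT_iter_mem hx _)

lemma enlog_top : enlog ⊤ = ⊤ := if_pos rfl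

lemma enlog_eq_top_iff {m : ℕ∞} : enlog m = ⊤ ↔ m = ⊤ := by
  constructor
  · intro h
    by_contra hm
    rw [enlog, if_neg hm] at h
    exact ENNReal.ofReal_ne_top h
  · rintro rfl; exact enlog_top

lemma enlog_natCast (m : ℕ) : enlog (m : ℕ∞) = ENNReal.ofReal (Real.log m) := by
  simp [enlog]

lemma enlog_mul {a b : ℕ∞} (ha : a ≠ 0) (hb : b ≠ 0) :
    enlog (a * b) = enlog a + enlog b := by
  rcases eq_or_ne a ⊤ with rfl | ha'
  · rw [ENat.top_mul hb, enlog_top, top_add]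
  rcases eq_or_ne b ⊤ with rfl | hb'
  · rw [ENat.mul_top ha, enlog_top, add_top]
  lift a to ℕ using ha'
  lift b to ℕ using hb'
  have hm : a ≠ 0 := by simpa using ha
  have hk : b ≠ 0 := by simpa using hb
  rw [← Nat.cast_mul, enlog_natCast, enlog_natCast, enlog_natCast,
    Nat.cast_mul, Real.log_mul (by exact_mod_cast hm) (by exact_mod_cast hk),
    ENNReal.ofReal_add (Real.log_nonneg (by exact_mod_cast Nat.one_le_iff_ne_zero.2 hm))
      (Real.log_nonneg (by exact_mod_cast Nat.one_le_iff_ne_zero.2 hk))]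

lemma enlog_prod (s : Finset ℕ) (g : ℕ → ℕ∞) (hg : ∀ i ∈ s, g i ≠ 0) :
    enlog (∏ i ∈ s, g i) = ∑ i ∈ s, enlog (g i) := by
  classical
  induction s using Finset.induction_on with
  | empty => simp [enlog, show WithTop.untopD 0 (1:ℕ∞) = 1 from rfl]
  | @insert a s ha ih =>
    rw [Finset.prod_insert ha, Finset.sum_insert ha,
      enlog_mul (hg a (Finset.mem_insert_self a s))
        (Finset.prod_ne_zero_iff.2 fun i hi => hg i (Finset.mem_insert_of_mem hi)),
      ih fun i hi => hg i (Finset.mem_insert_of_mem hi)]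

lemma gauss_lower (m : ℕ) : ∀ n, m ≤ n → n * n ≤ 2 * (∑ i ∈ Finset.Icc m n, i) + m * m := by
  intro n hn
  induction n, hn using Nat.le_induction with
  | base => simp [Finset.Icc_self]
  | succ n hn ih =>
    rw [Finset.sum_Icc_succ_top (by omega)]
    nlinarith

lemma gauss_upper (n : ℕ) : 2 * (∑ i ∈ Finset.Icc 1 n, i) = n * (n + 1) := by
  induction n with
  | zero => simp
  | succ n ih =>
    rw [Finset.sum_Icc_succ_top (by omega), Nat.mul_add, ih]
    ring

lemma tendsto_cast_div_sq_zero (c : ℕ) :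
    Tendsto (fun n : ℕ => (c : ℝ≥0∞) / (n : ℝ≥0∞) ^ 2) atTop (𝓝 0) := by
  have h1 : Tendsto (fun n : ℕ => (c : ℝ≥0∞) * (n : ℝ≥0∞)⁻¹) atTop (𝓝 0) := by
    simpa using ENNReal.Tendsto.const_mul ENNReal.tendsto_inv_nat_nhds_zero
      (Or.inr (ENNReal.natCast_ne_top c))
  apply tendsto_of_tendsto_of_tendsto_of_le_of_le' tendsto_const_nhds h1
  · exact Eventually.of_forall fun n => zero_le
  · filter_upwards [eventually_ge_atTop 1] with n hn
    rw [div_eq_mul_inv]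
    refine mul_le_mul_right (ENNReal.inv_le_inv.2 ?_) _
    exact le_self_pow₀ (by exact_mod_cast hn) two_ne_zero

lemma tendsto_sq_div_two_top :
    Tendsto (fun n : ℕ => (n : ℝ≥0∞) ^ 2 / 2) atTop (𝓝 ⊤) := by
  apply tendsto_nhds_top_mono ENNReal.tendsto_nat_nhds_top
  filter_upwards [eventually_ge_atTop 2] with n hn
  rw [ENNReal.le_div_iff_mul_le (Or.inl two_ne_zero) (Or.inl ENNReal.ofNat_ne_top)]
  calc (n:ℝ≥0∞) * 2 = ((n * 2 : ℕ) : ℝ≥0∞) := by push_cast; ring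
    _ ≤ ((n*n : ℕ):ℝ≥0∞) := by exact_mod_cast Nat.mul_le_mul (le_refl n) hn
    _ = (n:ℝ≥0∞)^2 := by push_cast; ring

lemma div_half (a b : ℝ≥0∞) : a / (b / 2) = a * 2 / b := by
  rw [div_eq_mul_inv a, ENNReal.inv_div (Or.inl ENNReal.ofNat_ne_top) (Or.inl two_ne_zero),
    ← mul_div_assoc]

lemma key (a : ℕ → ℝ≥0∞) (α : ℝ≥0∞)
    (h : Tendsto (fun n : ℕ => a n / (n : ℝ≥0∞)) atTop (𝓝 α))
    (ha : α ≠ ⊤ → ∀ n, 1 ≤ n → a n ≠ ⊤) :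
    Tendsto (fun n : ℕ => (∑ i ∈ Finset.Icc 1 n, a i) / ((n : ℝ≥0∞) ^ 2 / 2))
      atTop (𝓝 α) := by
  refine tendsto_of_le_liminf_of_limsup_le ?_ ?_ isBounded_le_of_top isBounded_ge_of_bot
  · -- α ≤ liminf
    refine le_of_forall_lt_imp_le_of_dense fun β hβ => ?_
    have hβtop : β ≠ ⊤ := (hβ.trans_le le_top).ne
    obtain ⟨n₀, hn₀⟩ := (eventually_atTop).1 (h.eventually (eventually_gt_nhds hβ))
    set m := max n₀ 1 with hm
    have hm1 : 1 ≤ m := le_max_right _ _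
    have key1 : ∀ᶠ n in atTop,
        β * (((n*n - m*m : ℕ) : ℝ≥0∞) / (n:ℝ≥0∞)^2)
          ≤ (∑ i ∈ Finset.Icc 1 n, a i) / ((n : ℝ≥0∞) ^ 2 / 2) := by
      filter_upwards [eventually_ge_atTop m] with n hn
      have hstep : ∀ i ∈ Finset.Icc m n, β * (i:ℝ≥0∞) ≤ a i := by
        intro i hi
        obtain ⟨hi1, hi2⟩ := Finset.mem_Icc.1 hi
        have hi0 : (i:ℝ≥0∞) ≠ 0 := by
          exact_mod_cast Nat.one_le_iff_ne_zero.1 (hm1.trans hi1)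
        exact (ENNReal.le_div_iff_mul_le (Or.inl hi0) (Or.inl (ENNReal.natCast_ne_top i))).1
          (hn₀ i ((le_max_left _ _).trans hi1)).le
      have h2 : β * ((n*n - m*m : ℕ) : ℝ≥0∞) ≤ (∑ i ∈ Finset.Icc 1 n, a i) * 2 := by
        calc β * ((n*n - m*m : ℕ) : ℝ≥0∞)
            ≤ β * ((2 * ∑ i ∈ Finset.Icc m n, i : ℕ) : ℝ≥0∞) := by
              refine mul_le_mul_right ?_ β
              exact_mod_cast Nat.sub_le_iff_le_add.2 (gauss_lower m n hn)
          _ = (β * ((∑ i ∈ Finset.Icc m n, i : ℕ) : ℝ≥0∞)) * 2 := by push_cast; ring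
          _ ≤ (∑ i ∈ Finset.Icc m n, a i) * 2 := by
              refine mul_le_mul_left ?_ 2
              rw [Nat.cast_sum, Finset.mul_sum]
              exact Finset.sum_le_sum hstep
          _ ≤ (∑ i ∈ Finset.Icc 1 n, a i) * 2 := by
              refine mul_le_mul_left ?_ 2
              exact Finset.sum_le_sum_of_subset (Finset.Icc_subset_Icc_left hm1)
      rw [div_half, ← mul_div_assoc]
      exact ENNReal.div_le_div_right h2 _
    have hu : Tendsto (fun n : ℕ => ((n*n - m*m : ℕ) : ℝ≥0∞) / (n:ℝ≥0∞)^2) atTop (𝓝 1) := by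
      have heq : ∀ᶠ n : ℕ in atTop,
          (1 : ℝ≥0∞) - ((m*m : ℕ) : ℝ≥0∞) / (n:ℝ≥0∞)^2
            = ((n*n - m*m : ℕ) : ℝ≥0∞) / (n:ℝ≥0∞)^2 := by
        filter_upwards [eventually_ge_atTop m, eventually_ge_atTop 1] with n hn hn1
        have hn0 : (n:ℝ≥0∞) ≠ 0 := by exact_mod_cast Nat.one_le_iff_ne_zero.1 hn1
        have hn0' : (n:ℝ≥0∞)^2 ≠ 0 := pow_ne_zero _ hn0
        rw [ENNReal.natCast_sub, ENNReal.sub_div (fun _ _ => hn0'),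
          show ((n*n : ℕ):ℝ≥0∞) = (n:ℝ≥0∞)^2 from by push_cast; ring,
          ENNReal.div_self hn0' (ENNReal.pow_ne_top (ENNReal.natCast_ne_top n))]
      refine Tendsto.congr' heq ?_
      have h0 : Tendsto (fun n : ℕ => ((m*m:ℕ):ℝ≥0∞) / (n:ℝ≥0∞)^2) atTop (𝓝 0) :=
        tendsto_cast_div_sq_zero (m*m)
      simpa using ENNReal.Tendsto.sub tendsto_const_nhds h0 (Or.inl ENNReal.one_ne_top)
    have hlim : Tendsto (fun n : ℕ => β * (((n*n - m*m : ℕ) : ℝ≥0∞) / (n:ℝ≥0∞)^2))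
        atTop (𝓝 β) := by
      simpa using ENNReal.Tendsto.const_mul hu (Or.inr hβtop)
    calc β = liminf (fun n : ℕ => β * (((n*n - m*m : ℕ) : ℝ≥0∞) / (n:ℝ≥0∞)^2)) atTop :=
        (hlim.liminf_eq).symm
      _ ≤ _ := liminf_le_liminf key1
  · -- limsup ≤ α
    rcases eq_or_ne α ⊤ with rfl | hα
    · exact le_top
    refine le_of_forall_gt_imp_ge_of_dense fun γ hγ => ?_
    rcases eq_or_ne γ ⊤ with rfl | hγtop
    · exact le_top
    obtain ⟨n₁, hn₁⟩ := (eventually_atTop).1 (h.eventually (eventually_lt_nhds hγ))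
    set m := max n₁ 1 with hm
    have hm1 : 1 ≤ m := le_max_right _ _
    set C := ∑ i ∈ Finset.Ico 1 m, a i with hC
    have hCtop : C ≠ ⊤ := by
      refine (ENNReal.sum_lt_top.2 fun i hi => ?_).ne
      exact (ha hα i (Finset.mem_Ico.1 hi).1).lt_top
    have key2 : ∀ᶠ n in atTop,
        (∑ i ∈ Finset.Icc 1 n, a i) / ((n:ℝ≥0∞)^2/2)
          ≤ C / ((n:ℝ≥0∞)^2/2) + γ * (((n*(n+1) : ℕ) : ℝ≥0∞) / (n:ℝ≥0∞)^2) := by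
      filter_upwards [eventually_ge_atTop m] with n hn
      have hsplit : (∑ i ∈ Finset.Icc 1 n, a i)
          = C + ∑ i ∈ Finset.Ico m (n+1), a i := by
        rw [hC, ← Finset.Ico_add_one_right_eq_Icc, Finset.sum_Ico_consecutive _ hm1 (by omega : m ≤ n+1)]
      have hsum : ∑ i ∈ Finset.Ico m (n+1), a i
          ≤ γ * ((∑ i ∈ Finset.Icc 1 n, i : ℕ) : ℝ≥0∞) := by
        calc ∑ i ∈ Finset.Ico m (n+1), a i
            ≤ ∑ i ∈ Finset.Ico m (n+1), γ * (i:ℝ≥0∞) := by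
              refine Finset.sum_le_sum fun i hi => ?_
              obtain ⟨hi1, _⟩ := Finset.mem_Ico.1 hi
              have hi0 : (i:ℝ≥0∞) ≠ 0 := by
                exact_mod_cast Nat.one_le_iff_ne_zero.1 (hm1.trans hi1)
              exact (ENNReal.div_le_iff_le_mul (Or.inl hi0)
                (Or.inl (ENNReal.natCast_ne_top i))).1
                (hn₁ i ((le_max_left _ _).trans hi1)).le
          _ = γ * ((∑ i ∈ Finset.Ico m (n+1), i : ℕ) : ℝ≥0∞) := by
              rw [Nat.cast_sum, Finset.mul_sum]
          _ ≤ γ * ((∑ i ∈ Finset.Icc 1 n, i : ℕ) : ℝ≥0∞) := by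
              refine mul_le_mul_right ?_ γ
              have : Finset.Ico m (n+1) ⊆ Finset.Icc 1 n := by
                rw [Finset.Ico_add_one_right_eq_Icc]; exact Finset.Icc_subset_Icc_left hm1
              exact_mod_cast Finset.sum_le_sum_of_subset this
      calc (∑ i ∈ Finset.Icc 1 n, a i) / ((n:ℝ≥0∞)^2/2)
          ≤ (C + γ * ((∑ i ∈ Finset.Icc 1 n, i : ℕ):ℝ≥0∞)) / ((n:ℝ≥0∞)^2/2) := by
            rw [hsplit]
            exact ENNReal.div_le_div_right (add_le_add_right hsum C) _
        _ = C / ((n:ℝ≥0∞)^2/2) + γ * (((n*(n+1):ℕ):ℝ≥0∞) / (n:ℝ≥0∞)^2) := by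
            rw [ENNReal.add_div]
            congr 1
            rw [div_half, mul_assoc,
              show ((∑ i ∈ Finset.Icc 1 n, i:ℕ):ℝ≥0∞) * 2 = ((n*(n+1):ℕ):ℝ≥0∞) from by
                rw [← gauss_upper n]; push_cast; ring,
              mul_div_assoc]
    have hlim2 : Tendsto (fun n : ℕ => C / ((n:ℝ≥0∞)^2/2)
        + γ * (((n*(n+1):ℕ):ℝ≥0∞) / (n:ℝ≥0∞)^2)) atTop (𝓝 (0 + γ * 1)) := by
      apply Tendsto.add
      · have h0 : Tendsto (fun n : ℕ => ((n:ℝ≥0∞)^2/2)⁻¹) atTop (𝓝 0) := by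
          simpa using ENNReal.tendsto_inv_iff.2 tendsto_sq_div_two_top
        simpa [div_eq_mul_inv] using ENNReal.Tendsto.const_mul h0 (Or.inr hCtop)
      · refine ENNReal.Tendsto.const_mul ?_ (Or.inr hγtop)
        have heq : ∀ᶠ n : ℕ in atTop,
            (1:ℝ≥0∞) + ((n:ℝ≥0∞))⁻¹ = ((n*(n+1):ℕ):ℝ≥0∞)/(n:ℝ≥0∞)^2 := by
          filter_upwards [eventually_ge_atTop 1] with n hn
          have hn0 : (n:ℝ≥0∞) ≠ 0 := by exact_mod_cast Nat.one_le_iff_ne_zero.1 hn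
          have hn0' : (n:ℝ≥0∞)^2 ≠ 0 := pow_ne_zero _ hn0
          rw [ENNReal.eq_div_iff hn0' (ENNReal.pow_ne_top (ENNReal.natCast_ne_top n)), mul_add,
            mul_one, show (n:ℝ≥0∞)^2 * ((n:ℝ≥0∞))⁻¹ = (n:ℝ≥0∞) from by
              rw [sq, mul_assoc, ENNReal.mul_inv_cancel hn0 (ENNReal.natCast_ne_top n),
                mul_one]]
          push_cast; ring
        refine Tendsto.congr' heq ?_
        simpa using Tendsto.add (tendsto_const_nhds : Tendsto (fun _ : ℕ => (1:ℝ≥0∞)) atTop (𝓝 1))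
          ENNReal.tendsto_inv_nat_nhds_zero
    calc limsup (fun n : ℕ => (∑ i ∈ Finset.Icc 1 n, a i) / ((n:ℝ≥0∞)^2/2)) atTop
        ≤ limsup (fun n : ℕ => C / ((n:ℝ≥0∞)^2/2)
            + γ * (((n*(n+1):ℕ):ℝ≥0∞) / (n:ℝ≥0∞)^2)) atTop := limsup_le_limsup key2
      _ = 0 + γ * 1 := hlim2.limsup_eq
      _ = γ := by simp


theorem stmt14 (x : ℝ) (hx : x ∈ Set.Icc (0 : ℝ) 1) (α : ℝ≥0∞)
    (h : Tendsto (fun n : ℕ => enlog (pierceDigit n x) / (n : ℝ≥0∞)) atTop (𝓝 α)) :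
    Tendsto (fun n : ℕ =>
        enlog (∏ i ∈ Finset.Icc 1 n, pierceDigit i x) / ((n : ℝ≥0∞) ^ 2 / 2))
      atTop (𝓝 α) := by
  have hne : ∀ i, pierceDigit i x ≠ 0 := pierceDigit_ne_zero hx
  have hrw : ∀ n : ℕ, enlog (∏ i ∈ Finset.Icc 1 n, pierceDigit i x)
      = ∑ i ∈ Finset.Icc 1 n, enlog (pierceDigit i x) := fun n =>
    enlog_prod _ _ fun i _ => hne i
  have ha : α ≠ ⊤ → ∀ n, 1 ≤ n → enlog (pierceDigit n x) ≠ ⊤ := by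
    intro hα n hn htop
    apply hα
    have hd : pierceDigit n x = ⊤ := enlog_eq_top_iff.1 htop
    have hz : pierceT^[n-1] x = 0 := by
      by_contra hz
      rw [pierceDigit, pierceD1, if_neg hz] at hd
      exact absurd hd (by simp)
    have hall : ∀ k, n ≤ k → pierceDigit k x = ⊤ := by
      intro k hk
      have hk1 : pierceT^[k-1] x = 0 := by
        have he : k - 1 = (k - n) + (n - 1) := by omega
        rw [he, Function.iterate_add_apply, hz,
          Function.iterate_fixed (by simp [pierceT]) (k - n)]
      rw [pierceDigit, hk1, pierceD1, if_pos rfl]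
    have hev : (fun n : ℕ => enlog (pierceDigit n x) / (n : ℝ≥0∞)) =ᶠ[atTop]
        (fun _ => (⊤ : ℝ≥0∞)) := by
      filter_upwards [eventually_ge_atTop n] with k hk
      rw [hall k hk, enlog_top, ENNReal.top_div_of_ne_top (ENNReal.natCast_ne_top k)]
    exact tendsto_nhds_unique h ((tendsto_congr' hev).2 tendsto_const_nhds)
  have hkey := key (fun i => enlog (pierceDigit i x)) α h ha
  simpa only [hrw] using hkey
end
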